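/- Let t ≥ 2, m ≥ 1 and n ≥ mt be integers, and for i = 1,…,m let B_i = {(i−1)t+1,…,it}. Define f : {0,1}^n → {0,1} by f(a) = 1 iff a_j = 1 for all j in some B_i, and for each k = (k_1,…,k_m) ∈ {1,…,t}^m define g_k(a) = 1 iff f(a) = 1 or a_j = 1 for every j ∈ ⋃_{i=1}^m (B_i \ {(i−1)t+k_i}). Then: (i) the set {a : g_k(a) ≠ f(a)} equals D_k := {a : a_{(i−1)t+k_i} = 0 for every i, and a_j = 1 for every j ≤ mt not of the form (i−1)t+k_i}; (ii) each D_k is nonempty; (iii) D_k and D_{k'} are disjoint whenever k ≠ k'; and (iv) for any integers s ≥ m+1 and r ≥ max(t, m(t−1)), the functions f and every g_k are s-term r-MDNF. -/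

import Mathlib

/-- `f : {0,1}^n → {0,1}` is an `s`-term `r`-MDNF if there are `p ≤ s` nonempty subsets
`T₁, …, T_p` of the coordinates, each of size at most `r`, such that `f a = 1` iff
for some `i` all coordinates of `a` indexed by `T i` equal `1`. -/
def IsMDNF (n s r : ℕ) (f : (Fin n → Bool) → Bool) : Prop :=
  ∃ (p : ℕ) (T : Fin p → Finset (Fin n)), p ≤ s ∧
    (∀ i, (T i).Nonempty ∧ (T i).card ≤ r) ∧
    ∀ a : Fin n → Bool, f a = true ↔ ∃ i, ∀ j ∈ T i, a j = true

/-- The hard family for the lower bound.  The blocks are `B_i = {i·t, …, (i+1)·t − 1}`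
(0-indexed) for `i < m`; `f a = 1` iff `a` is all-ones on some block `B_i`;
for `k : Fin m → Fin t`, `g k a = 1` iff `f a = 1` or `a` is all-ones on
`⋃_i (B_i \ {i·t + k i})`; and `D k` is the set of assignments that are `0` at every
coordinate `i·t + k i` and `1` at every other coordinate `< m·t`.  Then
(i) `{a | g k a ≠ f a} = D k`; (ii) each `D k` is nonempty; (iii) the `D k` are pairwise
disjoint; (iv) for `s ≥ m + 1` and `r ≥ max t (m·(t−1))`, `f` and every `g k` are
`s`-term `r`-MDNF. -/

private lemma blk_uniq {t i i' v v' : ℕ} (hv : v < t) (hv' : v' < t)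
    (h : i * t + v = i' * t + v') : i = i' ∧ v = v' := by
  have key : i = i' := by
    by_contra hne
    rcases Nat.lt_or_ge i i' with hlt | hge
    · have h1 : (i + 1) * t ≤ i' * t := Nat.mul_le_mul_right t hlt
      have h2 : (i+1)*t = i*t+t := by ring
      omega
    · have hlt : i' < i := by omega
      have h1 : (i' + 1) * t ≤ i * t := Nat.mul_le_mul_right t hlt
      have h2 : (i'+1)*t = i'*t+t := by ring
      omega
  subst key; omega

private lemma coord_lt' {t m i v : ℕ} (hi : i < m) (hv : v < t) : i * t + v < m * t := by
  have h1 : (i + 1) * t ≤ m * t := Nat.mul_le_mul_right t hi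
  have h2 : (i+1)*t = i*t+t := by ring
  omega

private def blockF (n t i : ℕ) : Finset (Fin n) :=
  Finset.univ.filter (fun j => i * t ≤ j.val ∧ j.val < (i + 1) * t)

private def chooseF (n t m : ℕ) (k : Fin m → Fin t) : Finset (Fin n) :=
  Finset.univ.filter (fun j => j.val < m * t ∧ ∀ i : Fin m, j.val ≠ i.val * t + (k i).val)

private lemma mem_blockF {n t i : ℕ} {j : Fin n} :
    j ∈ blockF n t i ↔ i * t ≤ j.val ∧ j.val < (i + 1) * t := by
  simp [blockF]

private lemma mem_chooseF {n t m : ℕ} {k : Fin m → Fin t} {j : Fin n} :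
    j ∈ chooseF n t m k ↔ j.val < m * t ∧ ∀ i : Fin m, j.val ≠ i.val * t + (k i).val := by
  simp [chooseF]

private lemma card_blockF (n t i : ℕ) : (blockF n t i).card ≤ t := by
  have h := Finset.card_le_card_of_injOn (fun j : Fin n => j.val)
    (s := blockF n t i) (t := Finset.Ico (i * t) ((i + 1) * t))
    (fun j hj => by rw [Finset.mem_coe, mem_blockF] at hj; simp [Finset.mem_Ico, hj.1, hj.2])
    (fun x _ y _ hxy => Fin.ext hxy)
  rw [Nat.card_Ico] at h
  have h2 : (i+1)*t = i*t+t := by ring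
  omega

private lemma blockF_nonempty {n t m i : ℕ} (hi : i < m) (ht : 0 < t) (hn : m * t ≤ n) :
    (blockF n t i).Nonempty := by
  have h1 : i * t + 0 < m * t := coord_lt' hi ht
  refine ⟨⟨i * t, by omega⟩, ?_⟩
  rw [mem_blockF]
  have h2 : (i+1)*t = i*t+t := by ring
  refine ⟨by simp, by simp; omega⟩

private lemma chooseF_nonempty {n t m : ℕ} (hm : 1 ≤ m) (ht : 2 ≤ t) (hn : m * t ≤ n)
    (k : Fin m → Fin t) : (chooseF n t m k).Nonempty := by
  have hm0 : 0 < m := hm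
  set i0 : Fin m := ⟨0, hm0⟩ with hi0
  set v0 : ℕ := if (k i0).val = 0 then 1 else 0 with hv0
  have hv0t : v0 < t := by rw [hv0]; split <;> omega
  have hv0ne : v0 ≠ (k i0).val := by rw [hv0]; split <;> omega
  have htm : t ≤ m * t := by
    calc t = 1 * t := (one_mul t).symm
    _ ≤ m * t := Nat.mul_le_mul_right t hm
  refine ⟨⟨v0, by omega⟩, ?_⟩
  rw [mem_chooseF]
  refine ⟨by simpa using by omega, ?_⟩
  intro i hEq
  simp only at hEq
  by_cases hiz : i.val = 0
  · have hii : i = i0 := Fin.ext hiz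
    rw [hii] at hEq
    have hz : (i0 : Fin m).val * t = 0 := by simp [hi0]
    omega
  · have h1 : 1 * t ≤ i.val * t := Nat.mul_le_mul_right t (by omega)
    rw [one_mul] at h1
    omega

private lemma card_chooseF {n t m : ℕ} (ht : 2 ≤ t) (k : Fin m → Fin t) :
    (chooseF n t m k).card ≤ m * (t - 1) := by
  classical
  set C : Finset ℕ := Finset.univ.image (fun i : Fin m => i.val * t + (k i).val) with hC
  set S : Finset ℕ := (Finset.range (m * t)).filter
    (fun x => ∀ i : Fin m, x ≠ i.val * t + (k i).val) with hS
  have hCsub : C ⊆ Finset.range (m * t) := by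
    intro x hx
    rw [hC, Finset.mem_image] at hx
    obtain ⟨i, _, rfl⟩ := hx
    exact Finset.mem_range.2 (coord_lt' i.2 (k i).2)
  have hSC : S = Finset.range (m * t) \ C := by
    ext x
    simp only [hS, hC, Finset.mem_filter, Finset.mem_sdiff, Finset.mem_range,
      Finset.mem_image, Finset.mem_univ, true_and, not_exists]
    constructor
    · rintro ⟨h1, h2⟩; exact ⟨h1, fun i hi => h2 i hi.symm⟩
    · rintro ⟨h1, h2⟩; exact ⟨h1, fun i hi => h2 i hi.symm⟩
  have hCcard : C.card = m := by
    rw [hC, Finset.card_image_of_injective _ ?_, Finset.card_univ, Fintype.card_fin]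
    intro i i' hii
    obtain ⟨e1, e2⟩ := blk_uniq (k i).2 (k i').2 hii
    exact Fin.ext e1
  have hScard : S.card = m * t - m := by
    rw [hSC, Finset.card_sdiff_of_subset hCsub, Finset.card_range, hCcard]
  have hle : (chooseF n t m k).card ≤ S.card := by
    refine Finset.card_le_card_of_injOn (fun j : Fin n => j.val) ?_ (fun x _ y _ hxy => Fin.ext hxy)
    intro j hj
    rw [Finset.mem_coe, mem_chooseF] at hj
    rw [Finset.mem_coe, hS, Finset.mem_filter, Finset.mem_range]
    exact ⟨hj.1, hj.2⟩
  have hmt : m * t = m * (t - 1) + m := by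
    have : m * ((t - 1) + 1) = m * (t - 1) + m := Nat.mul_succ m (t - 1)
    have h2 : (t - 1) + 1 = t := by omega
    rw [h2] at this
    omega
  omega

theorem hard_family_properties
    (t m n : ℕ) (ht : 2 ≤ t) (hm : 1 ≤ m) (hn : m * t ≤ n)
    (f : (Fin n → Bool) → Bool)
    (g : (Fin m → Fin t) → (Fin n → Bool) → Bool)
    (D : (Fin m → Fin t) → Set (Fin n → Bool))
    (hf : ∀ a : Fin n → Bool,
      f a = true ↔ ∃ i : Fin m, ∀ j : Fin n,
        i.val * t ≤ j.val → j.val < (i.val + 1) * t → a j = true)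
    (hg : ∀ (k : Fin m → Fin t) (a : Fin n → Bool),
      g k a = true ↔ (f a = true ∨
        ∀ j : Fin n, j.val < m * t →
          (∀ i : Fin m, j.val ≠ i.val * t + (k i).val) → a j = true))
    (hD : ∀ (k : Fin m → Fin t) (a : Fin n → Bool),
      a ∈ D k ↔ ((∀ (i : Fin m) (j : Fin n), j.val = i.val * t + (k i).val → a j = false) ∧
        (∀ j : Fin n, j.val < m * t →
          (∀ i : Fin m, j.val ≠ i.val * t + (k i).val) → a j = true))) :
    (∀ k : Fin m → Fin t, {a : Fin n → Bool | g k a ≠ f a} = D k) ∧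
    (∀ k : Fin m → Fin t, (D k).Nonempty) ∧
    (∀ k k' : Fin m → Fin t, k ≠ k' → D k ∩ D k' = ∅) ∧
    (∀ s r : ℕ, m + 1 ≤ s → max t (m * (t - 1)) ≤ r →
      IsMDNF n s r f ∧ ∀ k : Fin m → Fin t, IsMDNF n s r (g k)) := by
  refine ⟨?_, ?_, ?_, ?_⟩
  · -- (i)
    intro k
    ext a
    simp only [Set.mem_setOf_eq]
    constructor
    · intro hne
      have hfa : f a = false := by
        rcases Bool.eq_false_or_eq_true (f a) with h | h
        · exact absurd (((hg k a).2 (Or.inl h)).trans h.symm) hne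
        · exact h
      have hga : g k a = true := by
        rcases Bool.eq_false_or_eq_true (g k a) with h | h
        · exact h
        · exact absurd (h.trans hfa.symm) hne
      have hcond := ((hg k a).1 hga).resolve_left (by rw [hfa]; exact Bool.false_ne_true)
      refine (hD k a).2 ⟨?_, hcond⟩
      intro i j hj
      rcases Bool.eq_false_or_eq_true (a j) with h | h
      · exfalso
        have hft : f a = true := by
          refine (hf a).2 ⟨i, ?_⟩
          intro j' h1 h2
          by_cases hjj : j'.val = j.val
          · rw [show j' = j from Fin.ext hjj]; exact h
          · refine hcond j' ?_ ?_
            · calc j'.val < (i.val + 1) * t := h2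
                _ ≤ m * t := Nat.mul_le_mul_right t i.2
            · intro i' heq
              have hst : (i.val + 1) * t = i.val * t + t := by ring
              have hvt : j'.val - i.val * t < t := by omega
              obtain ⟨e1, e2⟩ := blk_uniq hvt (k i').2
                (show i.val * t + (j'.val - i.val * t) = i'.val * t + (k i').val by omega)
              have hii : i' = i := Fin.ext e1.symm
              rw [hii] at e2
              exact hjj (by omega)
        rw [hfa] at hft; exact Bool.false_ne_true hft
      · exact h
    · intro ha
      obtain ⟨h1, h2⟩ := (hD k a).1 ha
      have hga : g k a = true := (hg k a).2 (Or.inr h2)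
      have hfa : f a = false := by
        rcases Bool.eq_false_or_eq_true (f a) with h | h
        · exfalso
          obtain ⟨i, hi⟩ := (hf a).1 h
          have hjn : i.val * t + (k i).val < n :=
            lt_of_lt_of_le (coord_lt' i.2 (k i).2) hn
          have hst : (i.val + 1) * t = i.val * t + t := by ring
          have hb : a ⟨_, hjn⟩ = true :=
            hi ⟨_, hjn⟩ (Nat.le_add_right _ _)
              (by show i.val * t + (k i).val < (i.val + 1) * t; have := (k i).2; omega)
          have hb' := h1 i ⟨_, hjn⟩ rfl
          rw [hb] at hb'
          exact Bool.noConfusion hb'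
        · exact h
      simp [hga, hfa]
  · -- (ii)
    intro k
    classical
    refine ⟨fun j => !decide (∃ i : Fin m, j.val = i.val * t + (k i).val), (hD k _).2 ⟨?_, ?_⟩⟩
    · intro i j hj
      simp only [Bool.not_eq_false', decide_eq_true_eq]
      exact ⟨i, hj⟩
    · intro j _ hne
      simp only [Bool.not_eq_true', decide_eq_false_iff_not, not_exists]
      exact hne
  · -- (iii)
    intro k k' hkk
    rw [Set.eq_empty_iff_forall_notMem]
    rintro a ⟨ha, ha'⟩
    obtain ⟨i, hi⟩ := Function.ne_iff.mp hkk
    obtain ⟨h1, _⟩ := (hD k a).1 ha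
    obtain ⟨_, h2'⟩ := (hD k' a).1 ha'
    have hjn : i.val * t + (k i).val < n := lt_of_lt_of_le (coord_lt' i.2 (k i).2) hn
    have hf1 : a ⟨_, hjn⟩ = false := h1 i ⟨_, hjn⟩ rfl
    have hf2 : a ⟨_, hjn⟩ = true := by
      refine h2' ⟨_, hjn⟩ (coord_lt' i.2 (k i).2) ?_
      intro i' heq
      obtain ⟨e1, e2⟩ := blk_uniq (k i).2 (k' i').2 heq
      have hii : i' = i := Fin.ext e1.symm
      rw [hii] at e2
      exact hi (Fin.ext e2)
    rw [hf1] at hf2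
    exact Bool.false_ne_true hf2
  · -- (iv)
    intro s r hs hr
    have hrt : t ≤ r := le_trans (le_max_left _ _) hr
    have hrm : m * (t - 1) ≤ r := le_trans (le_max_right _ _) hr
    constructor
    · refine ⟨m, fun i => blockF n t i.val, by omega, ?_, ?_⟩
      · intro i
        exact ⟨blockF_nonempty i.2 (by omega) hn, le_trans (card_blockF n t i.val) hrt⟩
      · intro a
        rw [hf a]
        constructor
        · rintro ⟨i, hi⟩
          exact ⟨i, fun j hj => by rw [mem_blockF] at hj; exact hi j hj.1 hj.2⟩
        · rintro ⟨i, hi⟩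
          exact ⟨i, fun j h1 h2 => hi j (mem_blockF.2 ⟨h1, h2⟩)⟩
    · intro k
      refine ⟨m + 1,
        fun q => Fin.lastCases (chooseF n t m k) (fun i : Fin m => blockF n t i.val) q,
        by omega, ?_, ?_⟩
      · intro q
        induction q using Fin.lastCases with
        | last =>
          simp only [Fin.lastCases_last]
          exact ⟨chooseF_nonempty hm ht hn k, le_trans (card_chooseF ht k) hrm⟩
        | cast i =>
          simp only [Fin.lastCases_castSucc]
          exact ⟨blockF_nonempty i.2 (by omega) hn, le_trans (card_blockF n t i.val) hrt⟩
      · intro a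
        rw [hg k a, hf a]
        constructor
        · rintro (⟨i, hi⟩ | hcond)
          · refine ⟨Fin.castSucc i, ?_⟩
            simp only [Fin.lastCases_castSucc]
            intro j hj
            rw [mem_blockF] at hj
            exact hi j hj.1 hj.2
          · refine ⟨Fin.last m, ?_⟩
            simp only [Fin.lastCases_last]
            intro j hj
            rw [mem_chooseF] at hj
            exact hcond j hj.1 hj.2
        · rintro ⟨q, hq⟩
          induction q using Fin.lastCases with
          | last =>
            simp only [Fin.lastCases_last] at hq
            exact Or.inr fun j h1 h2 => hq j (mem_chooseF.2 ⟨h1, h2⟩)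
          | cast i =>
            simp only [Fin.lastCases_castSucc] at hq
            exact Or.inl ⟨i, fun j h1 h2 => hq j (mem_blockF.2 ⟨h1, h2⟩)⟩
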